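/- Let (A,I) be a finite independence alphabet such that I ∪ Δ_A is transitive, with A₁, …, A_r the connected components of Γ(A,I), and let φ be an endomorphism of the trace monoid M(A,I) with φ(a) ≠ 1 for all a ∈ A. For u ∈ M(A,I), let u ξ̄ = {i ∈ {1,…,r} : some letter of A_i occurs in u}. Then for all u,v ∈ M(A,I), u ξ̄ = v ξ̄ implies φ(u) ξ̄ = φ(v) ξ̄. -/

import Mathlib

/-- The defining relation of the trace monoid: `ab = ba` whenever `(a,b) ∈ I`. -/
def traceRel (A : Type) (I : A → A → Prop) : FreeMonoid A → FreeMonoid A → Prop :=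
  fun x y => ∃ a b : A, I a b ∧ x = FreeMonoid.of a * FreeMonoid.of b ∧
    y = FreeMonoid.of b * FreeMonoid.of a

/-- The congruence on the free monoid generated by the trace relations. -/
def traceCon (A : Type) (I : A → A → Prop) : Con (FreeMonoid A) :=
  conGen (traceRel A I)

/-- The trace monoid `M(A,I)`, the quotient of the free monoid on `A` by the
congruence generated by `{(ab, ba) : (a,b) ∈ I}`. -/
abbrev TraceMonoid (A : Type) (I : A → A → Prop) := (traceCon A I).Quotient



/-- The image in the trace monoid of a letter `a ∈ A`. -/
def traceOf (A : Type) (I : A → A → Prop) (a : A) : TraceMonoid A I :=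
  (traceCon A I).mk' (FreeMonoid.of a)

/-- The set of letters which are periodic points of the endomorphism `φ`. -/
def perLetters (A : Type) (I : A → A → Prop) (φ : Monoid.End (TraceMonoid A I)) : Set A :=
  {a : A | ∃ n : ℕ, 1 ≤ n ∧ (φ ^ n) (traceOf A I a) = traceOf A I a}

/-- The independence graph `Γ(A,I)`: vertices `A`, with `a` and `b` adjacent iff they
are distinct and independent. (For symmetric `I`, `I a b ∧ I b a` is just `I a b`.) -/
def indepGraph (A : Type) (I : A → A → Prop) : SimpleGraph A where
  Adj a b := a ≠ b ∧ I a b ∧ I b a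
  symm := ⟨fun _ _ ⟨h1, h2, h3⟩ => ⟨h1.symm, h3, h2⟩⟩
  loopless := ⟨fun _ ⟨h, _⟩ => h rfl⟩

/-- The content of a trace: the set of letters occurring in (any representative of) it. -/
def content (A : Type) (I : A → A → Prop) (u : TraceMonoid A I) : Set A :=
  {a : A | ∃ w : FreeMonoid A, (traceCon A I).mk' w = u ∧ a ∈ FreeMonoid.toList w}

/-- `ξ̄(u)`: the set of connected components of `Γ(A,I)` meeting the content of `u`. -/
def xiBar (A : Type) (I : A → A → Prop) (u : TraceMonoid A I) :
    Set (indepGraph A I).ConnectedComponent :=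
  {c | ∃ a ∈ content A I u, (indepGraph A I).connectedComponentMk a = c}

theorem listCommMem {α : Type*} : ∀ n (x y : List α), x.length ≤ n →
    x ++ y = y ++ x → y ≠ [] → ∀ a ∈ x, a ∈ y := by
  intro n
  induction n with
  | zero => intro x y hl _ _ a ha; simp [List.length_eq_zero_iff.mp (Nat.le_zero.mp hl)] at ha
  | succ n ih =>
    intro x y hl hc hy a ha
    rcases le_or_gt x.length y.length with h | h
    · have h1 : x <+: y ++ x := hc ▸ (x.prefix_append y)
      have h2 := List.prefix_iff_eq_take.mp h1
      rw [List.take_append, Nat.sub_eq_zero_of_le h, List.take_zero,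
        List.append_nil] at h2
      have hx : x <+: y := h2.symm ▸ (y.take_prefix x.length)
      exact hx.subset ha
    · have h1 : y <+: x ++ y := hc.symm ▸ (y.prefix_append x)
      have h2 := List.prefix_iff_eq_take.mp h1
      rw [List.take_append, Nat.sub_eq_zero_of_le h.le, List.take_zero,
        List.append_nil] at h2
      have hyx : y <+: x := h2.symm ▸ (x.take_prefix y.length)
      obtain ⟨z, hz⟩ := hyx
      have hyne : y.length ≠ 0 := fun h0 => hy (List.length_eq_zero_iff.mp h0)
      have hc' : z ++ y = y ++ z := by
        apply List.append_cancel_left (as := y)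
        rw [← List.append_assoc, hz]; exact hc
      rcases List.mem_append.mp (hz ▸ ha) with h' | h'
      · exact h'
      · refine ih z y ?_ hc' hy a h'
        rw [← hz] at hl; simp at hl; omega

theorem listCommSet {α : Type*} (x y : List α) (hx : x ≠ []) (hy : y ≠ [])
    (hc : x ++ y = y ++ x) : {a | a ∈ x} = {a | a ∈ y} := by
  ext a
  exact ⟨fun h => listCommMem x.length x y le_rfl hc hy a h,
    fun h => listCommMem y.length y x le_rfl hc.symm hx a h⟩

section Aux
variable (A : Type) (I : A → A → Prop)

/-- same component for independent letters -/
theorem comp_eq_of_I (hsym : Symmetric I) (hirr : Irreflexive I) {a b : A} (h : I a b) :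
    (indepGraph A I).connectedComponentMk a = (indepGraph A I).connectedComponentMk b :=
  SimpleGraph.ConnectedComponent.eq.mpr
    (SimpleGraph.Adj.reachable (show a ≠ b ∧ I a b ∧ I b a from ⟨fun he => hirr a (he ▸ h), h, hsym h⟩))

/-- projection to the free monoid on components -/
def piC (hsym : Symmetric I) (hirr : Irreflexive I) : TraceMonoid A I →* FreeMonoid (indepGraph A I).ConnectedComponent :=
  (traceCon A I).lift (FreeMonoid.map (indepGraph A I).connectedComponentMk) <| by
    apply Con.conGen_le.mpr
    rintro x y ⟨a, b, hI, rfl, rfl⟩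
    show FreeMonoid.map _ _ = FreeMonoid.map _ _
    rw [map_mul, map_mul, FreeMonoid.map_of, FreeMonoid.map_of,
      comp_eq_of_I A I hsym hirr hI]

theorem piC_mk' (hsym : Symmetric I) (hirr : Irreflexive I) (w : FreeMonoid A) :
    piC A I hsym hirr ((traceCon A I).mk' w) =
      FreeMonoid.map (indepGraph A I).connectedComponentMk w :=
  Con.lift_mk' _ _

/-- multiset content hom -/
def msHom : TraceMonoid A I →* Multiplicative (Multiset A) :=
  (traceCon A I).lift (FreeMonoid.lift fun a => Multiplicative.ofAdd ({a} : Multiset A)) <| by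
    apply Con.conGen_le.mpr
    rintro x y ⟨a, b, hI, rfl, rfl⟩
    show FreeMonoid.lift _ _ = FreeMonoid.lift _ _
    rw [map_mul, map_mul, FreeMonoid.lift_eval_of, FreeMonoid.lift_eval_of]
    exact congrArg Multiplicative.ofAdd (add_comm _ _)

theorem msHom_mk' (w : FreeMonoid A) :
    (msHom A I) ((traceCon A I).mk' w) = Multiplicative.ofAdd (↑(FreeMonoid.toList w) : Multiset A) := by
  refine (Con.lift_mk' _ _).trans ?_
  induction w using FreeMonoid.recOn with
  | one => rfl
  | of_mul a w ih =>
    rw [map_mul, FreeMonoid.lift_eval_of, ih]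
    rfl

theorem content_mk' (w : FreeMonoid A) :
    content A I ((traceCon A I).mk' w) = {a | a ∈ FreeMonoid.toList w} := by
  ext a
  constructor
  · rintro ⟨w', hw', ha⟩
    have := congrArg (msHom A I) hw'
    rw [msHom_mk', msHom_mk'] at this
    have h2 : (↑(FreeMonoid.toList w') : Multiset A) = ↑(FreeMonoid.toList w) :=
      Multiplicative.ofAdd.injective this
    have : a ∈ (↑(FreeMonoid.toList w) : Multiset A) := h2 ▸ (Multiset.mem_coe.mpr ha)
    exact Multiset.mem_coe.mp this
  · intro ha; exact ⟨w, rfl, ha⟩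

theorem xiBar_eq_pi (hsym : Symmetric I) (hirr : Irreflexive I) (u : TraceMonoid A I) :
    xiBar A I u = {c | c ∈ FreeMonoid.toList (piC A I hsym hirr u)} := by
  obtain ⟨w, rfl⟩ := Con.mk'_surjective (c := traceCon A I) u
  rw [piC_mk']
  ext c
  simp only [xiBar, content_mk', Set.mem_setOf_eq, FreeMonoid.toList_map, List.mem_map]

theorem piC_ne_nil (hsym : Symmetric I) (hirr : Irreflexive I) (u : TraceMonoid A I) (hu : u ≠ 1) :
    FreeMonoid.toList (piC A I hsym hirr u) ≠ [] := by
  obtain ⟨w, rfl⟩ := Con.mk'_surjective (c := traceCon A I) u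
  rw [piC_mk', FreeMonoid.toList_map]
  intro h
  rw [List.map_eq_nil_iff] at h
  apply hu
  have : w = 1 := FreeMonoid.toList.injective h
  rw [this, map_one]

end Aux


/-- The letter-components of the image of a single letter under `φ`. -/
def fSet (A : Type) (I : A → A → Prop) (hsym : Symmetric I) (hirr : Irreflexive I)
    (φ : Monoid.End (TraceMonoid A I)) (a : A) :
    Set (indepGraph A I).ConnectedComponent :=
  {c | c ∈ FreeMonoid.toList (piC A I hsym hirr (φ (traceOf A I a)))}

theorem traceOf_comm (A : Type) (I : A → A → Prop) {a b : A} (h : I a b) :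
    traceOf A I a * traceOf A I b = traceOf A I b * traceOf A I a := by
  rw [traceOf, traceOf, ← map_mul, ← map_mul]
  exact (traceCon A I).eq.mpr (ConGen.Rel.of _ _ ⟨a, b, h, rfl, rfl⟩)

theorem fSet_adj (A : Type) (I : A → A → Prop) (hsym : Symmetric I) (hirr : Irreflexive I)
    (φ : Monoid.End (TraceMonoid A I)) (hne : ∀ a : A, φ (traceOf A I a) ≠ 1)
    {a b : A} (h : I a b) :
    fSet A I hsym hirr φ a = fSet A I hsym hirr φ b := by
  have hc := congrArg (piC A I hsym hirr ∘ φ) (traceOf_comm A I h)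
  simp only [Function.comp_apply, map_mul] at hc
  have hc' := congrArg FreeMonoid.toList hc
  rw [FreeMonoid.toList_mul, FreeMonoid.toList_mul] at hc'
  exact listCommSet _ _ (piC_ne_nil A I hsym hirr _ (hne a)) (piC_ne_nil A I hsym hirr _ (hne b)) hc'

theorem fSet_comp_eq (A : Type) (I : A → A → Prop) (hsym : Symmetric I) (hirr : Irreflexive I)
    (φ : Monoid.End (TraceMonoid A I)) (hne : ∀ a : A, φ (traceOf A I a) ≠ 1)
    {a b : A} (h : (indepGraph A I).connectedComponentMk a = (indepGraph A I).connectedComponentMk b) :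
    fSet A I hsym hirr φ a = fSet A I hsym hirr φ b := by
  have hw : ∀ {x y : A}, (indepGraph A I).Walk x y →
      fSet A I hsym hirr φ x = fSet A I hsym hirr φ y := by
    intro x y p
    induction p with
    | nil => rfl
    | cons hadj _ ih => exact (fSet_adj A I hsym hirr φ hne (And.left (And.right hadj))).trans ih
  exact (SimpleGraph.ConnectedComponent.eq.mp h).elim fun p => hw p

theorem pi_phi_list (A : Type) (I : A → A → Prop) (hsym : Symmetric I) (hirr : Irreflexive I)
    (φ : Monoid.End (TraceMonoid A I)) :
    ∀ l : List A, {c | c ∈ FreeMonoid.toList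
        (piC A I hsym hirr (φ ((traceCon A I).mk' (FreeMonoid.ofList l))))} =
      {c | ∃ a ∈ l, c ∈ fSet A I hsym hirr φ a} := by
  intro l
  induction l with
  | nil =>
    simp only [FreeMonoid.ofList_nil, map_one, FreeMonoid.toList_one]
    ext c; simp
  | cons a l ih =>
    have : FreeMonoid.ofList (a :: l) = FreeMonoid.of a * FreeMonoid.ofList l := rfl
    rw [this, map_mul, map_mul, map_mul, FreeMonoid.toList_mul]
    ext c
    simp only [Set.mem_setOf_eq, List.mem_append, List.mem_cons]
    constructor
    · rintro (h | h)
      · exact ⟨a, Or.inl rfl, h⟩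
      · obtain ⟨b, hb, hcb⟩ := (Set.ext_iff.mp ih c).mp h
        exact ⟨b, Or.inr hb, hcb⟩
    · rintro ⟨b, hb | hb, hcb⟩
      · exact Or.inl (hb ▸ hcb)
      · exact Or.inr ((Set.ext_iff.mp ih c).mpr ⟨b, hb, hcb⟩)

theorem xiBar_phi (A : Type) (I : A → A → Prop) (hsym : Symmetric I) (hirr : Irreflexive I)
    (φ : Monoid.End (TraceMonoid A I)) (u : TraceMonoid A I) :
    xiBar A I (φ u) = {c | ∃ a ∈ content A I u, c ∈ fSet A I hsym hirr φ a} := by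
  obtain ⟨w, rfl⟩ := Con.mk'_surjective (c := traceCon A I) u
  rw [xiBar_eq_pi A I hsym hirr, content_mk']
  have hw : w = FreeMonoid.ofList (FreeMonoid.toList w) := rfl
  rw [hw]
  exact pi_phi_list A I hsym hirr φ (FreeMonoid.toList w)

/-- Suppose `I ∪ Δ_A` is transitive and `φ` is an endomorphism of `M(A,I)` with
`φ(a) ≠ 1` for every letter `a`. If `u` and `v` meet the same connected components of
`Γ(A,I)`, then so do `φ(u)` and `φ(v)`. -/
theorem xiBar_apply_eq (A : Type) [Fintype A] (I : A → A → Prop)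
    (hsym : Symmetric I) (hirr : Irreflexive I)
    (htrans : Transitive (fun a b : A => I a b ∨ a = b))
    (φ : Monoid.End (TraceMonoid A I))
    (hne : ∀ a : A, φ (traceOf A I a) ≠ 1) :
    ∀ u v : TraceMonoid A I,
      xiBar A I u = xiBar A I v → xiBar A I (φ u) = xiBar A I (φ v) := by
  intro u v huv
  rw [xiBar_phi A I hsym hirr φ u, xiBar_phi A I hsym hirr φ v]
  have key : ∀ x y : TraceMonoid A I, xiBar A I x = xiBar A I y →
      ∀ c, (∃ a ∈ content A I x, c ∈ fSet A I hsym hirr φ a) →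
        ∃ a ∈ content A I y, c ∈ fSet A I hsym hirr φ a := by
    rintro x y hxy c ⟨a, ha, hca⟩
    have hcomp : (indepGraph A I).connectedComponentMk a ∈ xiBar A I y :=
      hxy ▸ ⟨a, ha, rfl⟩
    obtain ⟨b, hb, hcb⟩ := hcomp
    exact ⟨b, hb, (fSet_comp_eq A I hsym hirr φ hne hcb).symm ▸ hca⟩
  ext c
  exact ⟨fun h => key u v huv c h, fun h => key v u huv.symm c h⟩
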